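/- Let n ≥ 1 and let ω > 0 be a flatness constant for dimension n, i.e., every convex body K ⊆ ℝⁿ (bounded closed convex set of nonzero volume) with lattice width w(K) ≥ ω contains a point of ℤⁿ. Then every nonempty rational polyhedron P ⊆ ℝⁿ whose lattice width is infinite or satisfies w(P) ≥ ω contains a point of ℤⁿ. -/

import Mathlib

open Matrix Set MeasureTheory

noncomputable def widthAlong {n : ℕ} (K : Set (Fin n → ℝ)) (c : Fin n → ℝ) : EReal :=
  sSup ((fun x => ((∑ i, c i * x i : ℝ) : EReal)) '' K) -
    sInf ((fun x => ((∑ i, c i * x i : ℝ) : EReal)) '' K)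

noncomputable def latticeWidth {n : ℕ} (K : Set (Fin n → ℝ)) : EReal :=
  sInf {w : EReal | ∃ c : Fin n → ℤ, c ≠ 0 ∧ w = widthAlong K (fun i => (c i : ℝ))}

def IsFlatnessConstant (n : ℕ) (ω : ℝ) : Prop :=
  0 < ω ∧ ∀ K : Set (Fin n → ℝ),
    Bornology.IsBounded K → IsClosed K → Convex ℝ K → volume K ≠ 0 →
    (ω : EReal) ≤ latticeWidth K → ∃ z : Fin n → ℤ, (fun i => (z i : ℝ)) ∈ K

def IsRatPolyhedron {n : ℕ} (P : Set (Fin n → ℝ)) : Prop :=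
  ∃ (m : ℕ) (A : Matrix (Fin m) (Fin n) ℚ) (b : Fin m → ℚ),
    P = {x | ∀ i, (∑ j, (A i j : ℝ) * x j) ≤ (b i : ℝ)}

/-- Solution set of a finite system of linear inequalities. -/
def solSet {ι κ : Type} [Fintype ι] (a : κ → ι → ℝ) (b : κ → ℝ) : Set (ι → ℝ) :=
  {x | ∀ i, ∑ j, a i j * x j ≤ b i}

lemma solSet_closed {ι κ : Type} [Fintype ι] (a : κ → ι → ℝ) (b : κ → ℝ) :
    IsClosed (solSet a b) := by
  have : solSet a b = ⋂ i, (fun x : ι → ℝ => ∑ j, a i j * x j) ⁻¹' Iic (b i) := by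
    ext x; simp [solSet, Set.mem_iInter]
  rw [this]
  refine isClosed_iInter fun i => IsClosed.preimage ?_ isClosed_Iic
  exact continuous_finset_sum _ fun j _ => continuous_const.mul (continuous_apply j)

lemma solSet_convex {ι κ : Type} [Fintype ι] (a : κ → ι → ℝ) (b : κ → ℝ) :
    Convex ℝ (solSet a b) := by
  intro x hx y hy s t hs ht hst
  intro i
  have h1 := hx i
  have h2 := hy i
  have : ∑ j, a i j * (s • x + t • y) j = s * ∑ j, a i j * x j + t * ∑ j, a i j * y j := by
    rw [Finset.mul_sum, Finset.mul_sum, ← Finset.sum_add_distrib]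
    refine Finset.sum_congr rfl fun j _ => ?_
    simp [Pi.add_apply, Pi.smul_apply, smul_eq_mul]; ring
  rw [this]
  have hb : s * b i + t * b i = b i := by rw [← add_mul, hst, one_mul]
  nlinarith [mul_le_mul_of_nonneg_left h1 hs, mul_le_mul_of_nonneg_left h2 ht]

/-- splitting a sum over `ι` at `l`. -/
lemma sum_split {ι : Type} [Fintype ι] [DecidableEq ι] (l : ι) (f : ι → ℝ) :
    ∑ j, f j = f l + ∑ j : {j : ι // j ≠ l}, f j := by
  classical
  rw [← Finset.add_sum_erase _ f (Finset.mem_univ l)]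
  congr 1
  rw [← Finset.sum_subtype (p := fun j => j ≠ l) (Finset.univ.erase l) (fun j => by simp) f]

section FM
variable {ι κ : Type} [Fintype ι] [DecidableEq ι] [Fintype κ]

/-- Fourier–Motzkin elimination: the projection of a polyhedron forgetting one
coordinate is a polyhedron. -/
lemma fm_project (l : ι) (a : κ → ι → ℝ) (b : κ → ℝ) :
    ∃ (a' : (κ ⊕ κ × κ) → {j : ι // j ≠ l} → ℝ) (b' : (κ ⊕ κ × κ) → ℝ),
      (fun (x : ι → ℝ) (j : {j : ι // j ≠ l}) => x (j : ι)) '' solSet a b = solSet a' b' := by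
  classical
  set π : (ι → ℝ) → ({j : ι // j ≠ l} → ℝ) := fun x j => x (j : ι) with hπ
  set g : κ → ({j : ι // j ≠ l} → ℝ) → ℝ := fun i y => ∑ j : {j : ι // j ≠ l}, a i (j : ι) * y j
    with hg
  have hsplit : ∀ (i : κ) (x : ι → ℝ), ∑ j, a i j * x j = a i l * x l + g i (π x) := by
    intro i x
    simpa using sum_split l (fun j => a i j * x j)
  refine ⟨Sum.elim
      (fun i j => if a i l = 0 then a i (j : ι) else 0)
      (fun p j => if 0 < a p.1 l ∧ a p.2 l < 0
        then a p.1 l * a p.2 (j : ι) - a p.2 l * a p.1 (j : ι) else 0),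
    Sum.elim
      (fun i => if a i l = 0 then b i else 0)
      (fun p => if 0 < a p.1 l ∧ a p.2 l < 0
        then a p.1 l * b p.2 - a p.2 l * b p.1 else 0), ?_⟩
  ext y
  constructor
  · rintro ⟨x, hx, rfl⟩
    rintro (i | ⟨i, i'⟩)
    · by_cases h : a i l = 0
      · simp only [solSet, Sum.elim_inl, h, if_true]
        have := hx i
        rw [hsplit i x, h, zero_mul, zero_add] at this
        exact this
      · simp [solSet, Sum.elim_inl, h]
    · by_cases h : 0 < a i l ∧ a i' l < 0
      · simp only [solSet, Set.mem_setOf_eq, Sum.elim_inr, if_pos h]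
        have h1 := hx i
        have h2 := hx i'
        rw [hsplit i x] at h1
        rw [hsplit i' x] at h2
        have hexp : ∑ j : {j : ι // j ≠ l},
            (a i l * a i' (j : ι) - a i' l * a i (j : ι)) * π x j
            = a i l * g i' (π x) - a i' l * g i (π x) := by
          rw [hg]
          simp only [Finset.mul_sum, ← Finset.sum_sub_distrib]
          exact Finset.sum_congr rfl fun j _ => by ring
        rw [hexp]
        nlinarith [mul_le_mul_of_nonneg_left h1 (le_of_lt (neg_pos.2 h.2)),
          mul_le_mul_of_nonneg_left h2 (le_of_lt h.1)]
      · simp [solSet, Sum.elim_inr, h]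
  · intro hy
    -- build the extension
    set d : κ → ℝ := fun i => b i - g i y with hd
    have hzero : ∀ i, a i l = 0 → 0 ≤ d i := by
      intro i h
      have := hy (Sum.inl i)
      simp only [solSet, Set.mem_setOf_eq, Sum.elim_inl, h, if_true] at this
      simp only [hd]
      linarith [this]
    have hpair : ∀ i i', 0 < a i l → a i' l < 0 → a i' l * d i ≤ a i l * d i' := by
      intro i i' h1 h2
      have := hy (Sum.inr (i, i'))
      simp only [solSet, Set.mem_setOf_eq, Sum.elim_inr, if_pos (And.intro h1 h2)] at this
      have hexp : ∑ j : {j : ι // j ≠ l},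
          (a i l * a i' (j : ι) - a i' l * a i (j : ι)) * y j
          = a i l * g i' y - a i' l * g i y := by
        simp only [hg, Finset.mul_sum, ← Finset.sum_sub_distrib]
        exact Finset.sum_congr rfl fun j _ => by ring
      rw [hexp] at this
      simp only [hd]
      nlinarith [this]
    -- choose t
    have hex : ∃ t : ℝ, ∀ i, a i l * t ≤ d i := by
      set Pos : Finset κ := Finset.univ.filter (fun i => 0 < a i l) with hPos
      set Neg : Finset κ := Finset.univ.filter (fun i => a i l < 0) with hNeg
      by_cases hP : Pos.Nonempty
      · refine ⟨Pos.inf' hP (fun i => d i / a i l), fun i => ?_⟩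
        rcases lt_trichotomy (a i l) 0 with h | h | h
        · -- negative row: use pairing with the minimizer
          obtain ⟨i₀, hi₀, hmin⟩ := Finset.exists_mem_eq_inf' hP (fun i => d i / a i l)
          have hi₀pos : 0 < a i₀ l := by
            have := hi₀; rw [hPos, Finset.mem_filter] at this; exact this.2
          rw [hmin]
          have hp := hpair i₀ i hi₀pos h
          rw [show a i l * (d i₀ / a i₀ l) = (a i l * d i₀) / a i₀ l from by ring,
            div_le_iff₀ hi₀pos]
          nlinarith [hp]
        · rw [h, zero_mul]; exact hzero i h
        · have hi : i ∈ Pos := by rw [hPos, Finset.mem_filter]; exact ⟨Finset.mem_univ i, h⟩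
          have := Finset.inf'_le (fun i => d i / a i l) hi
          calc a i l * Pos.inf' hP (fun i => d i / a i l) ≤ a i l * (d i / a i l) :=
                mul_le_mul_of_nonneg_left this (le_of_lt h)
            _ = d i := by rw [mul_comm, div_mul_cancel₀ _ (ne_of_gt h)]
      · by_cases hN : Neg.Nonempty
        · refine ⟨Neg.sup' hN (fun i => d i / a i l), fun i => ?_⟩
          rcases lt_trichotomy (a i l) 0 with h | h | h
          · have hi : i ∈ Neg := by rw [hNeg, Finset.mem_filter]; exact ⟨Finset.mem_univ i, h⟩
            have := Finset.le_sup' (fun i => d i / a i l) hi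
            calc a i l * Neg.sup' hN (fun i => d i / a i l) ≤ a i l * (d i / a i l) := by
                  exact mul_le_mul_of_nonpos_left this (le_of_lt h)
              _ = d i := by rw [mul_comm, div_mul_cancel₀ _ (ne_of_lt h)]
          · rw [h, zero_mul]; exact hzero i h
          · exact absurd (by rw [hPos, Finset.mem_filter]; exact ⟨Finset.mem_univ i, h⟩ :
              i ∈ Pos) (by intro hh; exact hP ⟨i, hh⟩)
        · refine ⟨0, fun i => ?_⟩
          have h0 : a i l = 0 := by
            by_contra hne
            rcases lt_or_gt_of_ne hne with h | h
            · exact hN ⟨i, by rw [hNeg, Finset.mem_filter]; exact ⟨Finset.mem_univ i, h⟩⟩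
            · exact hP ⟨i, by rw [hPos, Finset.mem_filter]; exact ⟨Finset.mem_univ i, h⟩⟩
          rw [h0, zero_mul]; exact hzero i h0
    obtain ⟨t, ht⟩ := hex
    refine ⟨fun j => if h : j = l then t else y ⟨j, h⟩, fun i => ?_, ?_⟩
    · have h2 : π (fun j => if h : j = l then t else y ⟨j, h⟩) = y := by
        funext j
        simp only [hπ]
        rw [dif_neg j.2]
      rw [hsplit, h2, dif_pos rfl]
      have := ht i
      simp only [hd] at this
      linarith
    · funext j
      simp only [hπ]
      rw [dif_neg j.2]
end FM

/-- The image of a polyhedron under a coordinate evaluation is closed. -/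
lemma eval_image_closed : ∀ (N : ℕ) (ι : Type) [Fintype ι], Fintype.card ι = N →
    ∀ (κ : Type) [Fintype κ] (a : κ → ι → ℝ) (b : κ → ℝ) (k : ι),
      IsClosed ((fun x : ι → ℝ => x k) '' solSet a b) := by
  intro N
  induction N using Nat.strong_induction_on with
  | _ N IH =>
    intro ι _ hcard κ _ a b k
    classical
    by_cases hl : ∃ l : ι, l ≠ k
    · obtain ⟨l, hlk⟩ := hl
      obtain ⟨a', b', him⟩ := fm_project l a b
      have hkl : k ≠ l := fun h => hlk h.symm
      have heq : (fun x : ι → ℝ => x k) '' solSet a b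
          = (fun y : {j : ι // j ≠ l} → ℝ => y ⟨k, hkl⟩) '' solSet a' b' := by
        rw [← him, Set.image_image]
      rw [heq]
      have hcard' : Fintype.card {j : ι // j ≠ l} = N - 1 := by
        have : Fintype.card {j : ι // j ≠ l} = Fintype.card ι - 1 := by
          rw [Fintype.card_subtype_compl (p := fun j => j = l), Fintype.card_subtype_eq]
        rw [this, hcard]
      have hN : 1 ≤ N := by
        rw [← hcard]
        exact Fintype.card_pos_iff.mpr ⟨k⟩
      exact IH (N - 1) (by omega) _ hcard' _ a' b' ⟨k, hkl⟩
    · push_neg at hl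
      have hsub : ∀ x : ι, x = k := hl
      let H : (ι → ℝ) ≃ₜ ℝ :=
        { toFun := fun x => x k
          invFun := fun t _ => t
          left_inv := fun x => funext fun j => by rw [hsub j]
          right_inv := fun t => rfl
          continuous_toFun := continuous_apply k
          continuous_invFun := continuous_pi fun _ => continuous_id }
      exact H.isClosedMap _ (solSet_closed a b)

/-- The image of a polyhedron under a linear functional is closed. -/
lemma functional_image_closed {ι κ : Type} [Fintype ι] [Fintype κ]
    (a : κ → ι → ℝ) (b : κ → ℝ) (c : ι → ℝ) :
    IsClosed ((fun x : ι → ℝ => ∑ j, c j * x j) '' solSet a b) := by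
  classical
  by_cases hc : c = 0
  · refine Set.Finite.isClosed (Set.Finite.subset (Set.finite_singleton 0) ?_)
    rintro _ ⟨x, _, rfl⟩
    simp [hc]
  · obtain ⟨k, hk⟩ : ∃ k, c k ≠ 0 := by
      by_contra h
      push_neg at h
      exact hc (funext h)
    set Φ : (ι → ℝ) → (ι → ℝ) := fun x j => if j = k then ∑ j', c j' * x j' else x j with hΦ
    set Ψ : (ι → ℝ) → (ι → ℝ) :=
      fun y j => if j = k then (y k - ∑ j' ∈ Finset.univ.erase k, c j' * y j') / c k else y j
      with hΨ
    have hsplit : ∀ x : ι → ℝ, ∑ j', c j' * x j'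
        = c k * x k + ∑ j' ∈ Finset.univ.erase k, c j' * x j' :=
      fun x => (Finset.add_sum_erase _ _ (Finset.mem_univ k)).symm
    have hΨΦ : ∀ x, Ψ (Φ x) = x := by
      intro x
      funext j
      by_cases hj : j = k
      · subst hj
        simp only [hΨ, hΦ, if_pos rfl]
        have herase : ∀ j' ∈ Finset.univ.erase j, c j' * (if j' = j then ∑ i, c i * x i else x j')
            = c j' * x j' := by
          intro j' hj'
          rw [if_neg (Finset.mem_erase.1 hj').1]
        rw [Finset.sum_congr rfl herase, hsplit x]
        field_simp
        rw [if_pos trivial]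
        ring
      · simp only [hΨ, hΦ, if_neg hj]
    have hΦΨ : ∀ y, Φ (Ψ y) = y := by
      intro y
      funext j
      by_cases hj : j = k
      · subst hj
        simp only [hΦ, hΨ, if_pos rfl]
        rw [hsplit (Ψ y)]
        simp only [hΨ, if_pos rfl]
        have herase : ∀ j' ∈ Finset.univ.erase j,
            c j' * (if j' = j then (y j - ∑ i ∈ Finset.univ.erase j, c i * y i) / c j else y j')
            = c j' * y j' := by
          intro j' hj'
          rw [if_neg (Finset.mem_erase.1 hj').1]
        rw [Finset.sum_congr rfl herase]
        field_simp
        ring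
      · simp only [hΦ, hΨ, if_neg hj]
    set a' : κ → ι → ℝ :=
      fun i j => if j = k then a i k / c k else a i j - a i k / c k * c j with ha'
    have key : ∀ (i : κ) (y : ι → ℝ), ∑ j, a' i j * y j = ∑ j, a i j * Ψ y j := by
      intro i y
      rw [← Finset.add_sum_erase _ (fun j => a' i j * y j) (Finset.mem_univ k),
          ← Finset.add_sum_erase _ (fun j => a i j * Ψ y j) (Finset.mem_univ k)]
      simp only [ha', hΨ, if_pos rfl]
      have h1 : ∀ j ∈ Finset.univ.erase k,
          (if j = k then a i k / c k else a i j - a i k / c k * c j) * y j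
          = a i j * y j - a i k / c k * (c j * y j) := by
        intro j hj; rw [if_neg (Finset.mem_erase.1 hj).1]; ring
      have h2 : ∀ j ∈ Finset.univ.erase k,
          a i j * (if j = k then (y k - ∑ j' ∈ Finset.univ.erase k, c j' * y j') / c k else y j)
          = a i j * y j := by
        intro j hj; rw [if_neg (Finset.mem_erase.1 hj).1]
      rw [Finset.sum_congr rfl h1, Finset.sum_congr rfl h2, Finset.sum_sub_distrib,
        ← Finset.mul_sum]
      field_simp
      ring
    have hsol : solSet a' b = Φ '' solSet a b := by
      ext y
      constructor
      · intro hy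
        refine ⟨Ψ y, ?_, hΦΨ y⟩
        intro i
        have := hy i
        rw [key i y] at this
        exact this
      · rintro ⟨x, hx, rfl⟩
        intro i
        rw [key i (Φ x), hΨΦ x]
        exact hx i
    have him : (fun x : ι → ℝ => ∑ j, c j * x j) '' solSet a b
        = (fun y : ι → ℝ => y k) '' solSet a' b := by
      rw [hsol, Set.image_image]
      refine Set.image_congr fun x _ => ?_
      simp only [hΦ, if_pos rfl]
    rw [him]
    exact eval_image_closed (Fintype.card ι) ι rfl κ a' b k
lemma width_two_point {n : ℕ} {K : Set (Fin n → ℝ)} (c : Fin n → ℝ) {u v : Fin n → ℝ}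
    (hu : u ∈ K) (hv : v ∈ K) :
    (((∑ i, c i * u i) - (∑ i, c i * v i) : ℝ) : EReal) ≤ widthAlong K c := by
  unfold widthAlong
  rw [EReal.coe_sub]
  exact EReal.sub_le_sub (le_sSup ⟨u, hu, rfl⟩) (sInf_le ⟨v, hv, rfl⟩)

lemma width_eq_of_max_min {n : ℕ} {K : Set (Fin n → ℝ)} (c : Fin n → ℝ) {u v : Fin n → ℝ}
    (hu : u ∈ K) (hv : v ∈ K)
    (hmax : ∀ x ∈ K, ∑ i, c i * x i ≤ ∑ i, c i * u i)
    (hmin : ∀ x ∈ K, ∑ i, c i * v i ≤ ∑ i, c i * x i) :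
    widthAlong K c = (((∑ i, c i * u i) - (∑ i, c i * v i) : ℝ) : EReal) := by
  unfold widthAlong
  rw [EReal.coe_sub]
  have h1 : sSup ((fun x => ((∑ i, c i * x i : ℝ) : EReal)) '' K)
      = ((∑ i, c i * u i : ℝ) : EReal) := by
    refine le_antisymm (sSup_le ?_) (le_sSup ⟨u, hu, rfl⟩)
    rintro w ⟨x, hx, rfl⟩
    exact EReal.coe_le_coe_iff.mpr (hmax x hx)
  have h2 : sInf ((fun x => ((∑ i, c i * x i : ℝ) : EReal)) '' K)
      = ((∑ i, c i * v i : ℝ) : EReal) := by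
    refine le_antisymm (sInf_le ⟨v, hv, rfl⟩) (le_sInf ?_)
    rintro w ⟨x, hx, rfl⟩
    exact EReal.coe_le_coe_iff.mpr (hmin x hx)
  rw [h1, h2]

lemma width_const {n : ℕ} {K : Set (Fin n → ℝ)} (hne : K.Nonempty) (c : Fin n → ℝ) (β : ℝ)
    (h : ∀ x ∈ K, ∑ i, c i * x i = β) : widthAlong K c = 0 := by
  obtain ⟨x0, hx0⟩ := hne
  have := width_eq_of_max_min c hx0 hx0
    (fun x hx => by rw [h x hx, h x0 hx0]) (fun x hx => by rw [h x hx, h x0 hx0])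
  rw [this]
  simp
/-- If `ω` is a flatness constant for dimension `n ≥ 1`, then every
nonempty rational polyhedron whose lattice width is infinite or at least `ω`
contains an integral point. -/
theorem rational_polyhedron_flatness {n : ℕ} (hn : 1 ≤ n) (ω : ℝ)
    (hω : IsFlatnessConstant n ω)
    (P : Set (Fin n → ℝ)) (hP : IsRatPolyhedron P) (hne : P.Nonempty)
    (hw : latticeWidth P = ⊤ ∨ (ω : EReal) ≤ latticeWidth P) :
    ∃ z : Fin n → ℤ, (fun i => (z i : ℝ)) ∈ P := by
  classical
  obtain ⟨hωpos, hflat⟩ := hω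
  obtain ⟨m, A, b, hPdef⟩ := hP
  set a : Fin m → Fin n → ℝ := fun i j => (A i j : ℝ) with ha
  set br : Fin m → ℝ := fun i => (b i : ℝ) with hbr
  have hPsol : P = solSet a br := hPdef
  obtain ⟨x0, hx0⟩ := hne
  have hx0' : ∀ i, ∑ j, a i j * x0 j ≤ br i := by rw [hPsol] at hx0; exact hx0
  have hwP : (ω : EReal) ≤ latticeWidth P := by
    rcases hw with h | h
    · rw [h]; exact le_top
    · exact h
  have hPC : Convex ℝ P := hPsol ▸ solSet_convex a br
  have hPcl : IsClosed P := hPsol ▸ solSet_closed a br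
  -- Step 1: no implicit equality with a nonzero row
  by_cases himp : ∃ i : Fin m, (fun j => A i j) ≠ 0 ∧ ∀ x ∈ P, ∑ j, a i j * x j = br i
  · exfalso
    obtain ⟨i, hrow, heqall⟩ := himp
    set N : ℕ := ∏ j, (A i j).den with hN
    have hNpos : 0 < N := Finset.prod_pos fun j _ => (A i j).pos
    have hNden : ∀ j, ((A i j).den : ℤ) ∣ (N : ℤ) :=
      fun j => Int.natCast_dvd_natCast.mpr (Finset.dvd_prod_of_mem _ (Finset.mem_univ j))
    set cz : Fin n → ℤ := fun j => (A i j).num * ((N : ℤ) / ((A i j).den : ℤ)) with hcz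
    have hcast : ∀ j, ((cz j : ℚ)) = A i j * (N : ℚ) := by
      intro j
      obtain ⟨t, ht⟩ := hNden j
      have hdenne : ((A i j).den : ℤ) ≠ 0 := Int.natCast_ne_zero.mpr (A i j).den_nz
      have h1 : cz j = (A i j).num * t := by
        rw [hcz]; simp only; rw [ht, Int.mul_ediv_cancel_left _ hdenne]
      have h2 : ((N : ℤ) : ℚ) = ((A i j).den : ℚ) * (t : ℚ) := by exact_mod_cast congrArg (Int.cast : ℤ → ℚ) ht
      calc ((cz j : ℚ)) = ((A i j).num : ℚ) * (t : ℚ) := by rw [h1]; push_cast; ring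
        _ = (A i j * ((A i j).den : ℚ)) * (t : ℚ) := by rw [Rat.mul_den_eq_num]
        _ = A i j * (N : ℚ) := by
            rw [show ((N:ℚ)) = ((A i j).den : ℚ) * (t : ℚ) from by exact_mod_cast h2]
            ring
    obtain ⟨j0, hj0⟩ : ∃ j0, A i j0 ≠ 0 := by
      by_contra h
      push_neg at h
      exact hrow (funext h)
    have hcz0 : cz ≠ 0 := by
      intro h
      have : (cz j0 : ℚ) = 0 := by rw [h]; simp
      rw [hcast j0] at this
      have hNne : ((N : ℚ)) ≠ 0 := Nat.cast_ne_zero.mpr (Nat.pos_iff_ne_zero.mp hNpos)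
      exact hj0 (by
        rcases mul_eq_zero.1 this with h' | h'
        · exact h'
        · exact absurd h' hNne)
    have hconst : ∀ x ∈ P, ∑ j, ((cz j : ℝ)) * x j = (N : ℝ) * br i := by
      intro x hx
      have hcastR : ∀ j, ((cz j : ℝ)) = a i j * (N : ℝ) := by
        intro j
        have := hcast j
        have : (((cz j : ℚ)) : ℝ) = ((A i j * (N : ℚ) : ℚ) : ℝ) := by rw [this]
        push_cast at this
        rw [ha]
        push_cast
        linarith [this]
      calc ∑ j, ((cz j : ℝ)) * x j = ∑ j, (N : ℝ) * (a i j * x j) := by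
            refine Finset.sum_congr rfl fun j _ => ?_
            rw [hcastR j]; ring
        _ = (N : ℝ) * ∑ j, a i j * x j := by rw [Finset.mul_sum]
        _ = (N : ℝ) * br i := by rw [heqall x hx]
    have hzero : widthAlong P (fun j => ((cz j : ℝ))) = 0 :=
      width_const ⟨x0, hx0⟩ _ ((N : ℝ) * br i) hconst
    have hle : latticeWidth P ≤ 0 := by
      have : latticeWidth P ≤ widthAlong P (fun j => ((cz j : ℝ))) := sInf_le ⟨cz, hcz0, rfl⟩
      rw [hzero] at this
      exact this
    have : (ω : EReal) ≤ 0 := le_trans hwP hle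
    rw [EReal.coe_nonpos] at this
    linarith
  · push_neg at himp
    have hstrict0 : ∀ i : Fin m, (fun j => A i j) ≠ 0 → ∃ x ∈ P, ∑ j, a i j * x j < br i := by
      intro i hr
      obtain ⟨x, hxP, hxne⟩ := himp i hr
      have hxle : ∑ j, a i j * x j ≤ br i := by rw [hPsol] at hxP; exact hxP i
      exact ⟨x, hxP, lt_of_le_of_ne hxle hxne⟩
    -- a point strictly satisfying all nonzero rows
    have hind : ∀ s : Finset (Fin m), ∃ x ∈ P,
        ∀ i ∈ s, (fun j => A i j) ≠ 0 → ∑ j, a i j * x j < br i := by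
      intro s
      induction s using Finset.induction_on with
      | empty => exact ⟨x0, hx0, by simp⟩
      | @insert i s hi IHs =>
        obtain ⟨x1, hx1P, hx1⟩ := IHs
        by_cases hrow : (fun j => A i j) = 0
        · refine ⟨x1, hx1P, fun i' hi' hr => ?_⟩
          rcases Finset.mem_insert.1 hi' with rfl | hmem
          · exact absurd hrow hr
          · exact hx1 i' hmem hr
        · obtain ⟨x2, hx2P, hx2⟩ := hstrict0 i hrow
          have hmid : (fun j => (x1 j + x2 j)/2) = (1/2 : ℝ) • x1 + (1/2 : ℝ) • x2 := by
            funext j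
            simp only [Pi.add_apply, Pi.smul_apply, smul_eq_mul]
            ring
          refine ⟨fun j => (x1 j + x2 j)/2, ?_, ?_⟩
          · rw [hmid]
            exact hPC hx1P hx2P (by norm_num) (by norm_num) (by norm_num)
          · intro i' hi' hr
            have hsum : ∑ j, a i' j * ((x1 j + x2 j)/2)
                = (∑ j, a i' j * x1 j)/2 + (∑ j, a i' j * x2 j)/2 := by
              have h' : ∀ j ∈ Finset.univ, a i' j * ((x1 j + x2 j)/2)
                  = a i' j * x1 j / 2 + a i' j * x2 j / 2 := fun j _ => by ring
              rw [Finset.sum_congr rfl h', Finset.sum_add_distrib,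
                ← Finset.sum_div, ← Finset.sum_div]
            rw [hsum]
            rcases Finset.mem_insert.1 hi' with rfl | hmem
            · have h1 : ∑ j, a i' j * x1 j ≤ br i' := by rw [hPsol] at hx1P; exact hx1P i'
              linarith [hx2]
            · have h2 : ∑ j, a i' j * x2 j ≤ br i' := by rw [hPsol] at hx2P; exact hx2P i'
              linarith [hx1 i' hmem hr]
    obtain ⟨xc, hxcP, hxc⟩ := hind Finset.univ
    -- the inner radius ε
    set I : Finset (Fin m) := Finset.univ.filter (fun i => (fun j => A i j) ≠ 0) with hI
    set gap : Fin m → ℝ := fun i => (br i - ∑ j, a i j * xc j) / (1 + ∑ j, |a i j|) with hgap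
    have hεne : (1:ℝ) ∈ insert (1:ℝ) (I.image gap) := Finset.mem_insert_self 1 _
    set ε : ℝ := (insert (1:ℝ) (I.image gap)).min' ⟨1, hεne⟩ with hε
    clear_value ε
    have hεpos : 0 < ε := by
      rw [hε]
      apply (Finset.lt_min'_iff _ _).mpr
      intro y hy
      rcases Finset.mem_insert.1 hy with rfl | hy
      · norm_num
      · obtain ⟨i, hiI, rfl⟩ := Finset.mem_image.1 hy
        have hrne := (Finset.mem_filter.1 hiI).2
        have hlt := hxc i (Finset.mem_univ i) hrne
        have hpos : 0 < 1 + ∑ j, |a i j| := by positivity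
        rw [hgap]
        exact div_pos (by linarith) hpos
    have hball : ∀ y : Fin n → ℝ, (∀ j, |y j - xc j| ≤ ε) → y ∈ P := by
      intro y hy
      rw [hPsol]
      intro i
      by_cases hrow : (fun j => A i j) = 0
      · have hz : ∀ j, a i j = 0 := by
          intro j
          have := congrFun hrow j
          rw [ha]
          simp only
          exact_mod_cast congrArg (Rat.cast : ℚ → ℝ) this
        have h1 : ∑ j, a i j * y j = 0 := Finset.sum_eq_zero fun j _ => by rw [hz j, zero_mul]
        have h2 : ∑ j, a i j * x0 j = 0 := Finset.sum_eq_zero fun j _ => by rw [hz j, zero_mul]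
        rw [h1]
        have := hx0' i
        rw [h2] at this
        exact this
      · have hiI : i ∈ I := Finset.mem_filter.2 ⟨Finset.mem_univ i, hrow⟩
        have hεle : ε ≤ gap i := by
          rw [hε]
          exact Finset.min'_le _ _ (Finset.mem_insert.2 (Or.inr (Finset.mem_image_of_mem gap hiI)))
        have habs : ∑ j, a i j * y j ≤ ∑ j, a i j * xc j + ε * ∑ j, |a i j| := by
          have hterm : ∀ j, a i j * y j ≤ a i j * xc j + |a i j| * ε := by
            intro j
            have h1 : a i j * (y j - xc j) ≤ |a i j| * ε := by
              calc a i j * (y j - xc j) ≤ |a i j * (y j - xc j)| := le_abs_self _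
                _ = |a i j| * |y j - xc j| := abs_mul _ _
                _ ≤ |a i j| * ε := mul_le_mul_of_nonneg_left (hy j) (abs_nonneg _)
            nlinarith [h1]
          calc ∑ j, a i j * y j ≤ ∑ j, (a i j * xc j + |a i j| * ε) :=
                Finset.sum_le_sum (fun j _ => hterm j)
            _ = ∑ j, a i j * xc j + ε * ∑ j, |a i j| := by
                rw [Finset.sum_add_distrib, ← Finset.sum_mul]; ring
        have hpos : 0 < 1 + ∑ j, |a i j| := by positivity
        have hsumnn : 0 ≤ ∑ j, |a i j| :=
          Finset.sum_nonneg fun j _ => abs_nonneg _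
        have hgapval : gap i * (1 + ∑ j, |a i j|) = br i - ∑ j, a i j * xc j := by
          rw [hgap]
          exact div_mul_cancel₀ _ (ne_of_gt hpos)
        nlinarith [mul_le_mul_of_nonneg_right hεle (le_of_lt hpos), habs, hεpos]
    -- candidate directions
    set C : Set (Fin n → ℤ) := {c | c ≠ 0 ∧ ∑ j, |((c j : ℤ) : ℝ)| ≤ ω / (2 * ε)} with hC
    have hCfin : C.Finite := by
      set B : ℤ := ⌈ω / (2 * ε)⌉ with hB
      apply Set.Finite.subset (Set.Finite.pi (fun j : Fin n => Set.finite_Icc (-B) B))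
      intro c hc
      rw [Set.mem_pi]
      intro j _
      rw [Set.mem_Icc, ← abs_le]
      have h1 : |((c j : ℤ) : ℝ)| ≤ ω / (2 * ε) := by
        refine le_trans ?_ hc.2
        exact Finset.single_le_sum (f := fun j' => |((c j' : ℤ) : ℝ)|)
          (fun j' _ => abs_nonneg _) (Finset.mem_univ j)
      have h2 : |((c j : ℤ) : ℝ)| ≤ (B : ℝ) := le_trans h1 (Int.le_ceil _)
      exact_mod_cast h2
    -- for each candidate, two points witnessing width ≥ ω
    have hUV : ∀ c ∈ C, ∃ u v : Fin n → ℝ, u ∈ P ∧ v ∈ P ∧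
        ω ≤ ∑ j, ((c j : ℤ) : ℝ) * u j - ∑ j, ((c j : ℤ) : ℝ) * v j := by
      intro c hc
      have hScl : IsClosed ((fun x : Fin n → ℝ => ∑ j, ((c j : ℤ) : ℝ) * x j) '' P) := by
        rw [hPsol]
        exact functional_image_closed a br _
      have hSne : ((fun x : Fin n → ℝ => ∑ j, ((c j : ℤ) : ℝ) * x j) '' P).Nonempty :=
        ⟨_, x0, hx0, rfl⟩
      by_cases hba : BddAbove ((fun x : Fin n → ℝ => ∑ j, ((c j : ℤ) : ℝ) * x j) '' P)
      · by_cases hbb : BddBelow ((fun x : Fin n → ℝ => ∑ j, ((c j : ℤ) : ℝ) * x j) '' P)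
        · obtain ⟨u, huP, hu⟩ := hScl.csSup_mem hSne hba
          obtain ⟨v, hvP, hv⟩ := hScl.csInf_mem hSne hbb
          refine ⟨u, v, huP, hvP, ?_⟩
          have hu' : ∑ j, ((c j : ℤ) : ℝ) * u j
              = sSup ((fun x : Fin n → ℝ => ∑ j, ((c j : ℤ) : ℝ) * x j) '' P) := hu
          have hv' : ∑ j, ((c j : ℤ) : ℝ) * v j
              = sInf ((fun x : Fin n → ℝ => ∑ j, ((c j : ℤ) : ℝ) * x j) '' P) := hv
          have hmax : ∀ x ∈ P, ∑ j, ((c j : ℤ) : ℝ) * x j ≤ ∑ j, ((c j : ℤ) : ℝ) * u j := by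
            intro x hx
            rw [hu']
            exact le_csSup hba ⟨x, hx, rfl⟩
          have hmin : ∀ x ∈ P, ∑ j, ((c j : ℤ) : ℝ) * v j ≤ ∑ j, ((c j : ℤ) : ℝ) * x j := by
            intro x hx
            rw [hv']
            exact csInf_le hbb ⟨x, hx, rfl⟩
          have hweq := width_eq_of_max_min (fun j => ((c j : ℤ) : ℝ)) huP hvP hmax hmin
          have hwc : (ω : EReal) ≤ widthAlong P (fun j => ((c j : ℤ) : ℝ)) :=
            le_trans hwP (sInf_le ⟨c, hc.1, rfl⟩)
          rw [hweq] at hwc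
          exact EReal.coe_le_coe_iff.mp hwc
        · have : ∃ yv ∈ (fun x : Fin n → ℝ => ∑ j, ((c j : ℤ) : ℝ) * x j) '' P,
              yv < ∑ j, ((c j : ℤ) : ℝ) * x0 j - ω := by
            by_contra h
            push_neg at h
            exact hbb ⟨∑ j, ((c j : ℤ) : ℝ) * x0 j - ω, fun y hy => h y hy⟩
          obtain ⟨_, ⟨v, hvP, rfl⟩, hlt⟩ := this
          exact ⟨x0, v, hx0, hvP, by linarith⟩
      · have : ∃ yv ∈ (fun x : Fin n → ℝ => ∑ j, ((c j : ℤ) : ℝ) * x j) '' P,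
            ∑ j, ((c j : ℤ) : ℝ) * x0 j + ω < yv := by
          by_contra h
          push_neg at h
          exact hba ⟨∑ j, ((c j : ℤ) : ℝ) * x0 j + ω, fun y hy => h y hy⟩
        obtain ⟨_, ⟨u, huP, rfl⟩, hlt⟩ := this
        exact ⟨u, x0, huP, hx0, by linarith⟩
    set CF : Finset (Fin n → ℤ) := hCfin.toFinset with hCF
    clear_value CF
    have hUV' : ∀ c ∈ CF, ∃ u v : Fin n → ℝ, u ∈ P ∧ v ∈ P ∧
        ω ≤ ∑ j, ((c j : ℤ) : ℝ) * u j - ∑ j, ((c j : ℤ) : ℝ) * v j :=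
      fun c hc => hUV c (hCfin.mem_toFinset.1 (by rwa [hCF] at hc))
    choose! u v huP hvP huv using hUV'
    set R : ℝ := ε + ∑ c ∈ CF, (dist (u c) xc + dist (v c) xc) with hR
    clear_value R
    have hsumnn : (0:ℝ) ≤ ∑ c ∈ CF, (dist (u c) xc + dist (v c) xc) :=
      Finset.sum_nonneg fun c _ => add_nonneg dist_nonneg dist_nonneg
    have hεR : ε ≤ R := by rw [hR]; linarith
    have hRpos : 0 < R := lt_of_lt_of_le hεpos hεR
    set K : Set (Fin n → ℝ) := P ∩ {y | ∀ j, |y j - xc j| ≤ R} with hK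
    have hKbd : Bornology.IsBounded K := by
      apply Bornology.IsBounded.subset (Metric.isBounded_closedBall (x := xc) (r := R))
      rintro y ⟨-, hy⟩
      rw [Metric.mem_closedBall, dist_pi_le_iff hRpos.le]
      intro j
      rw [Real.dist_eq]
      exact hy j
    have hKcl : IsClosed K := by
      refine IsClosed.inter hPcl ?_
      have hbox : {y : Fin n → ℝ | ∀ j, |y j - xc j| ≤ R}
          = ⋂ j, (fun y : Fin n → ℝ => |y j - xc j|) ⁻¹' Set.Iic R := by
        ext y; simp [Set.mem_iInter]
      rw [hbox]
      exact isClosed_iInter fun j =>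
        IsClosed.preimage (((continuous_apply j).sub continuous_const).abs) isClosed_Iic
    have hKcv : Convex ℝ K := by
      refine hPC.inter ?_
      intro y hy z hz s t hs ht hst j
      have hdec : (s • y + t • z) j - xc j = s * (y j - xc j) + t * (z j - xc j) := by
        simp only [Pi.add_apply, Pi.smul_apply, smul_eq_mul]
        have : s * y j + t * z j - xc j = s * (y j - xc j) + t * (z j - xc j) + (s + t - 1) * xc j := by ring
        rw [this, hst]
        ring
      rw [hdec]
      calc |s * (y j - xc j) + t * (z j - xc j)|
          ≤ |s * (y j - xc j)| + |t * (z j - xc j)| := abs_add_le _ _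
        _ = s * |y j - xc j| + t * |z j - xc j| := by
            rw [abs_mul, abs_mul, abs_of_nonneg hs, abs_of_nonneg ht]
        _ ≤ s * R + t * R := add_le_add (mul_le_mul_of_nonneg_left (hy j) hs)
            (mul_le_mul_of_nonneg_left (hz j) ht)
        _ = R := by rw [← add_mul, hst, one_mul]
    have hKvol : MeasureTheory.volume K ≠ 0 := by
      have hboxsub : Set.Icc (fun j => xc j - ε) (fun j => xc j + ε) ⊆ K := by
        intro y hy
        rw [Set.mem_Icc] at hy
        have habs : ∀ j, |y j - xc j| ≤ ε := by
          intro j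
          have h1 : xc j - ε ≤ y j := hy.1 j
          have h2 : y j ≤ xc j + ε := hy.2 j
          rw [abs_le]
          constructor <;> linarith
        exact ⟨hball y habs, fun j => le_trans (habs j) hεR⟩
      intro h0
      have hb0 := MeasureTheory.measure_mono_null hboxsub h0
      rw [Real.volume_Icc_pi] at hb0
      have hfac : ∀ j : Fin n, ENNReal.ofReal ((xc j + ε) - (xc j - ε)) = ENNReal.ofReal (2*ε) := by
        intro j; congr 1; ring
      rw [Finset.prod_congr rfl (fun j _ => hfac j), Finset.prod_const] at hb0
      have hcard : (Finset.univ : Finset (Fin n)).card = n := by simp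
      rw [hcard] at hb0
      have hne0 : ENNReal.ofReal (2*ε) ≠ 0 := by
        rw [ne_eq, ENNReal.ofReal_eq_zero, not_le]
        linarith
      exact hne0 (pow_eq_zero_iff (Nat.pos_iff_ne_zero.mp hn) |>.mp hb0)
    have hKwidth : (ω : EReal) ≤ latticeWidth K := by
      apply le_sInf
      rintro w ⟨c, hc0, rfl⟩
      by_cases hcC : c ∈ C
      · have hcCF : c ∈ CF := by rw [hCF]; exact hCfin.mem_toFinset.2 hcC
        have hterm : dist (u c) xc + dist (v c) xc
            ≤ ∑ c' ∈ CF, (dist (u c') xc + dist (v c') xc) :=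
          Finset.single_le_sum (fun c' _ => add_nonneg dist_nonneg dist_nonneg) hcCF
        have hmem : ∀ w : Fin n → ℝ, dist w xc ≤ R → w ∈ K → True := fun _ _ _ => trivial
        have huK : u c ∈ K := by
          refine ⟨huP c hcCF, fun j => ?_⟩
          have hj : |u c j - xc j| ≤ dist (u c) xc := by
            rw [← Real.dist_eq]
            exact dist_le_pi_dist (u c) xc j
          have : dist (u c) xc ≤ R := by
            rw [hR]
            have := dist_nonneg (x := v c) (y := xc)
            linarith
          linarith
        have hvK : v c ∈ K := by
          refine ⟨hvP c hcCF, fun j => ?_⟩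
          have hj : |v c j - xc j| ≤ dist (v c) xc := by
            rw [← Real.dist_eq]
            exact dist_le_pi_dist (v c) xc j
          have : dist (v c) xc ≤ R := by
            rw [hR]
            have := dist_nonneg (x := u c) (y := xc)
            linarith
          linarith
        calc (ω : EReal)
            ≤ ((∑ j, ((c j : ℤ) : ℝ) * u c j - ∑ j, ((c j : ℤ) : ℝ) * v c j : ℝ) : EReal) :=
              EReal.coe_le_coe_iff.mpr (huv c hcCF)
          _ ≤ widthAlong K (fun j => ((c j : ℤ) : ℝ)) :=
              width_two_point (fun j => ((c j : ℤ) : ℝ)) huK hvK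
      · have hsum : ω / (2*ε) < ∑ j, |((c j : ℤ) : ℝ)| := by
          by_contra h
          push_neg at h
          exact hcC ⟨hc0, h⟩
        set sgn : Fin n → ℝ := fun j => if ((c j : ℤ) : ℝ) < 0 then -1 else 1 with hsgn
        clear_value sgn
        have hsgnval : ∀ j, ((c j : ℤ) : ℝ) * sgn j = |((c j : ℤ) : ℝ)| := by
          intro j
          simp only [hsgn]
          by_cases h : ((c j : ℤ) : ℝ) < 0
          · rw [if_pos h, abs_of_neg h]; ring
          · rw [if_neg h, abs_of_nonneg (not_lt.1 h)]; ring
        have habs_sgn : ∀ j, |sgn j| = 1 := by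
          intro j
          simp only [hsgn]
          by_cases h : ((c j : ℤ) : ℝ) < 0 <;> simp [h]
        have hdist : ∀ j, |(fun j => xc j + ε * sgn j) j - xc j| = ε ∧
            |(fun j => xc j - ε * sgn j) j - xc j| = ε := by
          intro j
          constructor
          · have : (xc j + ε * sgn j) - xc j = ε * sgn j := by ring
            rw [this, abs_mul, habs_sgn j, abs_of_pos hεpos, mul_one]
          · have : (xc j - ε * sgn j) - xc j = -(ε * sgn j) := by ring
            rw [this, abs_neg, abs_mul, habs_sgn j, abs_of_pos hεpos, mul_one]
        have huuK : (fun j => xc j + ε * sgn j) ∈ K :=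
          ⟨hball _ (fun j => le_of_eq (hdist j).1), fun j => le_trans (le_of_eq (hdist j).1) hεR⟩
        have hvvK : (fun j => xc j - ε * sgn j) ∈ K :=
          ⟨hball _ (fun j => le_of_eq (hdist j).2), fun j => le_trans (le_of_eq (hdist j).2) hεR⟩
        have hdiff : ∑ j, ((c j : ℤ) : ℝ) * (xc j + ε * sgn j)
            - ∑ j, ((c j : ℤ) : ℝ) * (xc j - ε * sgn j) = 2 * ε * ∑ j, |((c j : ℤ) : ℝ)| := by
          rw [← Finset.sum_sub_distrib, Finset.mul_sum]
          refine Finset.sum_congr rfl fun j _ => ?_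
          rw [← hsgnval j]
          ring
        have hωle : ω ≤ ∑ j, ((c j : ℤ) : ℝ) * (xc j + ε * sgn j)
            - ∑ j, ((c j : ℤ) : ℝ) * (xc j - ε * sgn j) := by
          rw [hdiff]
          have h2ε : 0 < 2 * ε := by linarith
          have := (div_lt_iff₀ h2ε).mp hsum
          nlinarith [this]
        calc (ω : EReal)
            ≤ ((∑ j, ((c j : ℤ) : ℝ) * (xc j + ε * sgn j)
              - ∑ j, ((c j : ℤ) : ℝ) * (xc j - ε * sgn j) : ℝ) : EReal) :=
              EReal.coe_le_coe_iff.mpr hωle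
          _ ≤ widthAlong K (fun j => ((c j : ℤ) : ℝ)) :=
              width_two_point (fun j => ((c j : ℤ) : ℝ)) huuK hvvK
    obtain ⟨z, hz⟩ := hflat K hKbd hKcl hKcv hKvol hKwidth
    exact ⟨z, hz.1⟩
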